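/- Let K be a differential field of characteristic 0. Any matrix A ∈ M_n(K[∂]) can be written as A = T U, where U ∈ M_n(K[∂]) is invertible in M_n(K[∂]) and T ∈ M_n(K[∂]) is upper triangular. -/

import Mathlib

/-- The ring of differential operators K[∂] over a differential field (K, d),
characterized abstractly. -/
structure DiffOpRing (K : Type) [Field K] (d : K → K) (R : Type) [Ring R] where
  ι : K →+* R
  dop : R
  comm : ∀ a : K, dop * ι a = ι a * dop + ι (d a)
  repr : ∀ r : R, ∃! c : ℕ →₀ K, r = c.sum fun i a => ι a * dop ^ i

namespace DiffOpRing

variable {K : Type} [Field K] {d : K → K} {R : Type} [Ring R] (S : DiffOpRing K d R)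

noncomputable def toR (c : ℕ →₀ K) : R := c.sum fun i a => S.ι a * S.dop ^ i

lemma toR_zero : S.toR 0 = 0 := Finsupp.sum_zero_index

lemma toR_add (c c' : ℕ →₀ K) : S.toR (c + c') = S.toR c + S.toR c' := by
  unfold toR
  apply Finsupp.sum_add_index' (fun i => by simp) (fun i a b => by simp [add_mul])

noncomputable def toRHom : (ℕ →₀ K) →+ R := ⟨⟨S.toR, S.toR_zero⟩, S.toR_add⟩

lemma toR_single (i : ℕ) (a : K) : S.toR (Finsupp.single i a) = S.ι a * S.dop ^ i := by
  unfold toR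
  exact Finsupp.sum_single_index (by simp)

noncomputable def co (r : R) : ℕ →₀ K := (S.repr r).choose

lemma toR_co (r : R) : S.toR (S.co r) = r := ((S.repr r).choose_spec.1).symm

lemma co_eq_of (r : R) (c : ℕ →₀ K) (h : r = S.toR c) : S.co r = c := by
  have h2 := (S.repr r).choose_spec.2 c h
  exact h2.symm

lemma co_toR (c : ℕ →₀ K) : S.co (S.toR c) = c := S.co_eq_of _ _ rfl

lemma co_zero : S.co (0 : R) = 0 := by
  have := S.co_eq_of 0 0 (by rw [toR_zero])
  exact this

lemma co_eq_zero {r : R} : S.co r = 0 ↔ r = 0 := by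
  constructor
  · intro h; rw [← S.toR_co r, h, toR_zero]
  · rintro rfl; exact S.co_zero

noncomputable def degN (r : R) : ℕ :=
  if h : (S.co r).support.Nonempty then (S.co r).support.max' h else 0

lemma degN_mem {r : R} (hr : r ≠ 0) : S.degN r ∈ (S.co r).support := by
  have h : (S.co r).support.Nonempty := by
    rw [Finsupp.support_nonempty_iff]
    exact fun hc => hr (S.co_eq_zero.mp hc)
  rw [degN, dif_pos h]
  exact Finset.max'_mem _ h

lemma lc_ne_zero {r : R} (hr : r ≠ 0) : S.co r (S.degN r) ≠ 0 :=
  Finsupp.mem_support_iff.mp (S.degN_mem hr)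

lemma le_degN {r : R} {j : ℕ} (hj : j ∈ (S.co r).support) : j ≤ S.degN r := by
  have h : (S.co r).support.Nonempty := ⟨j, hj⟩
  rw [degN, dif_pos h]
  exact Finset.le_max' _ _ hj

lemma co_eq_zero_of_gt {r : R} {j : ℕ} (hj : S.degN r < j) : S.co r j = 0 := by
  by_contra hc
  exact absurd (S.le_degN (Finsupp.mem_support_iff.mpr hc)) (not_le.mpr hj)

lemma degN_lt_of {r : R} {m : ℕ} (h : ∀ j, m ≤ j → S.co r j = 0) :
    r = 0 ∨ S.degN r < m := by
  by_cases hr : r = 0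
  · exact Or.inl hr
  · right
    by_contra hlt
    exact S.lc_ne_zero hr (h _ (not_lt.mp hlt))


lemma d_zero (hd_add : ∀ a b : K, d (a + b) = d a + d b) : d 0 = 0 := by
  have := hd_add 0 0
  simp at this
  exact this

lemma dop_pow_mul_ι (i : ℕ) (c : K) :
    ∃ e : ℕ →₀ K, S.dop ^ i * S.ι c = S.toR e ∧ (∀ j, i < j → e j = 0) ∧ e i = c := by
  induction i with
  | zero =>
      refine ⟨Finsupp.single 0 c, ?_, ?_, by simp⟩
      · simp [S.toR_single]
      · intro j hj
        rw [Finsupp.single_apply, if_neg (by omega)]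
  | succ i ih =>
      obtain ⟨e, he, hsupp, htop⟩ := ih
      refine ⟨e.sum fun t a => Finsupp.single (t+1) a + Finsupp.single t (d a), ?_, ?_, ?_⟩
      · rw [pow_succ', mul_assoc, he]
        rw [show S.toR (e.sum fun t a => Finsupp.single (t+1) a + Finsupp.single t (d a))
            = e.sum fun t a => S.toR (Finsupp.single (t+1) a + Finsupp.single t (d a)) from
          map_finsuppSum S.toRHom e _]
        rw [show S.toR e = e.sum fun t a => S.ι a * S.dop ^ t from rfl, Finsupp.mul_sum]
        apply Finsupp.sum_congr
        intro t ht
        rw [S.toR_add, S.toR_single, S.toR_single]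
        rw [← mul_assoc, S.comm, add_mul, pow_succ', ← mul_assoc]
      · intro j hj
        rw [Finsupp.sum_apply]
        apply Finset.sum_eq_zero
        intro t ht
        have htle : t ≤ i := by
          by_contra hc
          exact Finsupp.mem_support_iff.mp ht (hsupp t (by omega))
        simp only [Finsupp.add_apply, Finsupp.single_apply]
        rw [if_neg (by omega), if_neg (by omega)]
        simp
      · rw [Finsupp.sum_apply]
        have hstep : ∀ t ∈ e.support,
            (Finsupp.single (t+1) (e t) + Finsupp.single t (d (e t))) (i+1)
            = if t = i then e t else 0 := by
          intro t ht
          have htle : t ≤ i := by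
            by_contra hc
            exact Finsupp.mem_support_iff.mp ht (hsupp t (by omega))
          simp only [Finsupp.add_apply, Finsupp.single_apply]
          by_cases h : t = i
          · subst h
            rw [if_pos rfl, if_neg (by omega), if_pos rfl, add_zero]
          · rw [if_neg (by omega), if_neg (by omega), if_neg h, add_zero]
        rw [Finsupp.sum, Finset.sum_congr rfl hstep]
        rw [Finset.sum_ite_eq' e.support i (fun t => e t)]
        by_cases h : i ∈ e.support
        · simp [h, htop]
        · rw [if_neg h]
          have : e i = 0 := Finsupp.notMem_support_iff.mp h
          rw [← htop, this]

lemma mul_monomial (b : R) (c : K) (k : ℕ) :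
    ∃ f : ℕ →₀ K, b * (S.ι c * S.dop ^ k) = S.toR f ∧
      (∀ j, S.degN b + k < j → f j = 0) ∧
      f (S.degN b + k) = S.co b (S.degN b) * c := by
  classical
  set D := S.degN b with hD
  have hE := fun i => (S.dop_pow_mul_ι i c).choose_spec
  set E : ℕ → ℕ →₀ K := fun i => (S.dop_pow_mul_ι i c).choose with hEdef
  have hE1 : ∀ i, S.dop ^ i * S.ι c = S.toR (E i) := fun i => (hE i).1
  have hE2 : ∀ i j, i < j → E i j = 0 := fun i => (hE i).2.1
  have hE3 : ∀ i, E i i = c := fun i => (hE i).2.2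
  have hEsupp : ∀ i t, t ∈ (E i).support → t ≤ i := by
    intro i t ht
    by_contra hc
    exact Finsupp.mem_support_iff.mp ht (hE2 i t (by omega))
  refine ⟨(S.co b).sum fun i a => (E i).sum fun t v => Finsupp.single (t+k) (a*v), ?_, ?_, ?_⟩
  · conv_lhs => rw [← S.toR_co b]
    rw [show S.toR (S.co b) = (S.co b).sum fun i a => S.ι a * S.dop ^ i from rfl]
    rw [Finsupp.sum_mul]
    rw [show S.toR ((S.co b).sum fun i a => (E i).sum fun t v => Finsupp.single (t+k) (a*v))
        = (S.co b).sum fun i a => S.toR ((E i).sum fun t v => Finsupp.single (t+k) (a*v)) from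
      map_finsuppSum S.toRHom _ _]
    apply Finsupp.sum_congr
    intro i hi
    rw [show S.toR ((E i).sum fun t v => Finsupp.single (t+k) ((S.co b) i * v))
        = (E i).sum fun t v => S.toR (Finsupp.single (t+k) ((S.co b) i * v)) from
      map_finsuppSum S.toRHom _ _]
    have : S.ι ((S.co b) i) * S.dop ^ i * (S.ι c * S.dop ^ k)
        = S.ι ((S.co b) i) * (S.dop ^ i * S.ι c) * S.dop ^ k := by
      rw [mul_assoc, mul_assoc, mul_assoc]
    rw [this, hE1 i]
    rw [show S.toR (E i) = (E i).sum fun t v => S.ι v * S.dop ^ t from rfl]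
    rw [Finsupp.mul_sum, Finsupp.sum_mul]
    apply Finsupp.sum_congr
    intro t ht
    rw [S.toR_single, map_mul, pow_add]
    rw [mul_assoc, mul_assoc, mul_assoc]
  · intro j hj
    rw [Finsupp.sum_apply]
    apply Finset.sum_eq_zero
    intro i hi
    dsimp only
    rw [Finsupp.sum_apply]
    apply Finset.sum_eq_zero
    intro t ht
    dsimp only
    have h1 : i ≤ D := S.le_degN hi
    have h2 : t ≤ i := hEsupp i t ht
    rw [Finsupp.single_apply, if_neg (by omega)]
  · rw [Finsupp.sum_apply]
    have hstep : ∀ i ∈ (S.co b).support,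
        ((E i).sum fun t v => Finsupp.single (t+k) ((S.co b) i * v)) (D + k)
        = if i = D then (S.co b) D * c else 0 := by
      intro i hi
      have h1 : i ≤ D := S.le_degN hi
      rw [Finsupp.sum_apply, Finsupp.sum]
      have hstep2 : ∀ t ∈ (E i).support,
          (Finsupp.single (t+k) ((S.co b) i * E i t)) (D + k)
          = if t = D then (S.co b) i * E i t else 0 := by
        intro t ht
        rw [Finsupp.single_apply]
        by_cases h : t = D
        · rw [if_pos (by omega), if_pos h]
        · rw [if_neg (by omega), if_neg h]
      rw [Finset.sum_congr rfl hstep2, Finset.sum_ite_eq' (E i).support D]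
      by_cases h : i = D
      · subst h
        by_cases hm : D ∈ (E D).support
        · rw [if_pos hm, if_pos rfl, hE3]
        · rw [if_neg hm, if_pos rfl]
          have : E D D = 0 := Finsupp.notMem_support_iff.mp hm
          rw [← hE3 D, this, mul_zero]
      · rw [if_neg h]
        have : D ∉ (E i).support := by
          intro hm
          exact h (le_antisymm h1 (hEsupp i D hm))
        rw [if_neg this]
    rw [Finsupp.sum, Finset.sum_congr rfl hstep, Finset.sum_ite_eq' (S.co b).support D]
    by_cases h : D ∈ (S.co b).support
    · rw [if_pos h]
    · rw [if_neg h]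
      have : (S.co b) D = 0 := Finsupp.notMem_support_iff.mp h
      rw [this, zero_mul]

lemma toR_sub (c c' : ℕ →₀ K) : S.toR (c - c') = S.toR c - S.toR c' :=
  map_sub S.toRHom c c'

lemma division (b : R) (hb : b ≠ 0) (a : R) :
    ∃ q r : R, a = b * q + r ∧ (r = 0 ∨ S.degN r < S.degN b) := by
  suffices H : ∀ N : ℕ, ∀ a : R, S.degN a ≤ N →
      ∃ q r : R, a = b * q + r ∧ (r = 0 ∨ S.degN r < S.degN b) from
    H (S.degN a) a le_rfl
  intro N
  induction N using Nat.strong_induction_on with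
  | _ N ih =>
    intro a ha
    by_cases h0 : a = 0
    · exact ⟨0, 0, by simp [h0], Or.inl rfl⟩
    by_cases hlt : S.degN a < S.degN b
    · exact ⟨0, a, by simp, Or.inr hlt⟩
    push_neg at hlt
    set Db := S.degN b with hDb
    set D := S.degN a with hD
    set cq := (S.co b Db)⁻¹ * S.co a D with hcq
    obtain ⟨f, hf, hfs, hft⟩ := S.mul_monomial b cq (D - Db)
    have hDbD : Db + (D - Db) = D := by omega
    set mono := S.ι cq * S.dop ^ (D - Db) with hmono
    set a' := a - b * mono with ha'def
    have ha'eq : a' = S.toR (S.co a - f) := by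
      rw [ha'def, hf, S.toR_sub, S.toR_co]
    have hcoa' : S.co a' = S.co a - f := by
      rw [ha'eq, S.co_toR]
    have hfD : f D = S.co a D := by
      have h := hft
      rw [← hDb, hDbD] at h
      rw [h, hcq, ← mul_assoc, mul_inv_cancel₀ (S.lc_ne_zero hb), one_mul]
    have hzero : ∀ j, D ≤ j → S.co a' j = 0 := by
      intro j hj
      rw [hcoa', Finsupp.sub_apply]
      rcases eq_or_lt_of_le hj with h | h
      · rw [← h, hfD, sub_self]
      · rw [S.co_eq_zero_of_gt (by omega), hfs j (by omega), sub_self]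
    rcases S.degN_lt_of hzero with h0' | hlt'
    · refine ⟨mono, 0, ?_, Or.inl rfl⟩
      rw [add_zero]
      exact sub_eq_zero.mp h0'

    · have hN : S.degN a' < N := by omega
      obtain ⟨q', r', heq, hr⟩ := ih (S.degN a') hN a' le_rfl
      refine ⟨mono + q', r', ?_, hr⟩
      rw [mul_add]
      have : a - b * mono = b * q' + r' := heq
      have h2 : a = b * mono + (b * q' + r') := by
        rw [← this]; abel
      rw [h2, add_assoc]

end DiffOpRing

section MatrixOps

variable {R : Type} [Ring R] {n : ℕ}

open Matrix

/-- Transvection: 1 + c E_{jk}. -/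
def Tv (j k : Fin n) (c : R) : Matrix (Fin n) (Fin n) R := 1 + Matrix.single j k c

lemma Tv_mul_Tv {j k : Fin n} (h : j ≠ k) (c c' : R) :
    Tv j k c * Tv j k c' = Tv j k (c + c') := by
  unfold Tv
  rw [add_mul, mul_add, mul_add, one_mul, mul_one, one_mul,
    Matrix.single_mul_single_of_ne (c := c) j k j (Ne.symm h) c', add_zero,
    Matrix.single_add]
  abel

lemma Tv_zero (j k : Fin n) : Tv j k (0 : R) = 1 := by
  unfold Tv
  ext a b
  simp [Matrix.single]

lemma Tv_unit {j k : Fin n} (h : j ≠ k) (c : R) : IsUnit (Tv j k c) := by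
  refine ⟨⟨Tv j k c, Tv j k (-c), ?_, ?_⟩, rfl⟩
  · rw [Tv_mul_Tv h, add_neg_cancel, Tv_zero]
  · rw [Tv_mul_Tv h, neg_add_cancel, Tv_zero]

lemma mul_Tv_same {j k : Fin n} (h : j ≠ k) (A : Matrix (Fin n) (Fin n) R) (c : R) (i : Fin n) :
    (A * Tv j k c) i k = A i k + A i j * c := by
  unfold Tv
  rw [mul_add, mul_one, Matrix.add_apply, Matrix.mul_single_apply_same]

lemma mul_Tv_ne {j k : Fin n} (h : j ≠ k) (A : Matrix (Fin n) (Fin n) R) (c : R) (i m : Fin n)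
    (hm : m ≠ k) : (A * Tv j k c) i m = A i m := by
  unfold Tv
  rw [mul_add, mul_one, Matrix.add_apply, Matrix.mul_single_apply_of_ne _ _ _ _ _ hm,
    add_zero]

/-- Column swap matrix. -/
def Sw (R : Type) [Ring R] {n : ℕ} (j k : Fin n) : Matrix (Fin n) (Fin n) R :=
  Matrix.of fun a b => if a = Equiv.swap j k b then 1 else 0

lemma mul_Sw_apply (j k : Fin n) (A : Matrix (Fin n) (Fin n) R) (i m : Fin n) :
    (A * Sw R j k) i m = A i (Equiv.swap j k m) := by
  rw [Matrix.mul_apply]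
  simp only [Sw, Matrix.of_apply, mul_ite, mul_one, mul_zero]
  rw [Finset.sum_ite_eq' Finset.univ (Equiv.swap j k m) (fun l => A i l)]
  simp

lemma Sw_mul_Sw (j k : Fin n) : Sw R j k * Sw R j k = 1 := by
  ext a b
  rw [mul_Sw_apply j k (Sw R j k) a b]
  simp only [Sw, Matrix.of_apply, Matrix.one_apply]
  rw [show (Equiv.swap j k) (Equiv.swap j k b) = b from Equiv.swap_apply_self j k b]

lemma Sw_unit (j k : Fin n) : IsUnit (Sw R j k) :=
  ⟨⟨Sw R j k, Sw R j k, Sw_mul_Sw j k, Sw_mul_Sw j k⟩, rfl⟩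

end MatrixOps

namespace DiffOpRing

variable {K : Type} [Field K] {d : K → K} {R : Type} [Ring R] (S : DiffOpRing K d R) {n : ℕ}

lemma kill_entry (N : ℕ) (A : Matrix (Fin n) (Fin n) R) (i j k : Fin n) (hjk : j ≠ k)
    (hN : A i k = 0 ∨ S.degN (A i k) ≤ N) :
    ∃ V : Matrix (Fin n) (Fin n) R, IsUnit V ∧ (A * V) i j = 0 ∧
      (∀ i' j', j' ≠ j → j' ≠ k → (A * V) i' j' = A i' j') ∧
      (∀ i', A i' j = 0 → A i' k = 0 → (A * V) i' j = 0 ∧ (A * V) i' k = 0) := by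
  induction N using Nat.strong_induction_on generalizing A with
  | _ N ih =>
    by_cases hk : A i k = 0
    · by_cases hj : A i j = 0
      · exact ⟨1, isUnit_one, by simpa using hj, fun i' j' _ _ => by simp,
          fun i' h1 h2 => by simpa using ⟨h1, h2⟩⟩
      · refine ⟨Sw R j k, Sw_unit j k, ?_, ?_, ?_⟩
        · rw [mul_Sw_apply, Equiv.swap_apply_left]; exact hk
        · intro i' j' h1 h2
          rw [mul_Sw_apply, Equiv.swap_apply_of_ne_of_ne h1 h2]
        · intro i' h1 h2
          constructor
          · rw [mul_Sw_apply, Equiv.swap_apply_left]; exact h2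
          · rw [mul_Sw_apply, Equiv.swap_apply_right]; exact h1
    · have hNle : S.degN (A i k) ≤ N := hN.resolve_left hk
      obtain ⟨q, r, hdiv, hr⟩ := S.division (A i k) hk (A i j)
      have hA1j : (A * Tv k j (-q)) i j = r := by
        rw [mul_Tv_same (Ne.symm hjk), hdiv, mul_neg]
        abel
      by_cases hr0 : r = 0
      · refine ⟨Tv k j (-q), Tv_unit (Ne.symm hjk) _, by rw [hA1j, hr0], ?_, ?_⟩
        · intro i' j' h1 _
          exact mul_Tv_ne (Ne.symm hjk) A _ i' j' h1
        · intro i' h1 h2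
          constructor
          · rw [mul_Tv_same (Ne.symm hjk), h1, h2, zero_mul, add_zero]
          · rw [mul_Tv_ne (Ne.symm hjk) A _ i' k (Ne.symm hjk), h2]
      · have hrd : S.degN r < S.degN (A i k) := hr.resolve_left hr0
        set A₁ := A * Tv k j (-q) with hA₁
        set A₂ := A₁ * Sw R j k with hA₂
        have hA2jk : ∀ i' j', j' ≠ j → j' ≠ k → A₂ i' j' = A i' j' := by
          intro i' j' h1 h2
          rw [hA₂, mul_Sw_apply, Equiv.swap_apply_of_ne_of_ne h1 h2, hA₁,
            mul_Tv_ne (Ne.symm hjk) A _ i' j' h1]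
        have hA2k : A₂ i k = r := by
          rw [hA₂, mul_Sw_apply, Equiv.swap_apply_right, hA1j]
        obtain ⟨W, hWu, hW1, hW2, hW3⟩ :=
          ih (S.degN r) (by omega) A₂ (Or.inr (by rw [hA2k]))
        refine ⟨Tv k j (-q) * Sw R j k * W,
          ((Tv_unit (Ne.symm hjk) (-q)).mul (Sw_unit j k)).mul hWu, ?_, ?_, ?_⟩
        · rw [← Matrix.mul_assoc, ← Matrix.mul_assoc]
          exact hW1
        · intro i' j' h1 h2
          rw [← Matrix.mul_assoc, ← Matrix.mul_assoc]
          rw [hW2 i' j' h1 h2]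
          exact hA2jk i' j' h1 h2
        · intro i' h1 h2
          have hA1'j : A₁ i' j = 0 := by
            rw [hA₁, mul_Tv_same (Ne.symm hjk), h1, h2, zero_mul, add_zero]
          have hA1'k : A₁ i' k = 0 := by
            rw [hA₁, mul_Tv_ne (Ne.symm hjk) A _ i' k (Ne.symm hjk)]; exact h2
          have h2j : A₂ i' j = 0 := by
            rw [hA₂, mul_Sw_apply, Equiv.swap_apply_left]; exact hA1'k
          have h2k : A₂ i' k = 0 := by
            rw [hA₂, mul_Sw_apply, Equiv.swap_apply_right]; exact hA1'j
          have := hW3 i' h2j h2k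
          rw [← Matrix.mul_assoc, ← Matrix.mul_assoc]
          exact this

include S in
lemma clear_row (m : ℕ) (hm : m < n) (B : Matrix (Fin n) (Fin n) R)
    (hB : ∀ i j : Fin n, (j:ℕ) < (i:ℕ) → m < (i:ℕ) → B i j = 0) :
    ∃ W : Matrix (Fin n) (Fin n) R, IsUnit W ∧
      (∀ i j : Fin n, (j:ℕ) < (i:ℕ) → m < (i:ℕ) → (B * W) i j = 0) ∧
      (∀ j : Fin n, (j:ℕ) < m → (B * W) ⟨m, hm⟩ j = 0) := by
  suffices H : ∀ t : ℕ, t ≤ m → ∃ W : Matrix (Fin n) (Fin n) R, IsUnit W ∧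
      (∀ i j : Fin n, (j:ℕ) < (i:ℕ) → m < (i:ℕ) → (B * W) i j = 0) ∧
      (∀ j : Fin n, (j:ℕ) < t → (B * W) ⟨m, hm⟩ j = 0) from H m le_rfl
  intro t
  induction t with
  | zero =>
      intro _
      exact ⟨1, isUnit_one, fun i j h1 h2 => by simpa using hB i j h1 h2,
        fun j hj => absurd hj (by omega)⟩
  | succ t ih =>
      intro ht
      obtain ⟨W, hWu, hW1, hW2⟩ := ih (by omega)
      have htn : t < n := by omega
      set jF : Fin n := ⟨t, htn⟩ with hjF
      set kF : Fin n := ⟨m, hm⟩ with hkF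
      have hne : jF ≠ kF := by
        intro h
        have := congrArg Fin.val h
        simp [hjF, hkF] at this
        omega
      obtain ⟨V, hVu, hV1, hV2, hV3⟩ :=
        S.kill_entry (S.degN ((B * W) kF kF)) (B * W) kF jF kF hne (Or.inr le_rfl)
      refine ⟨W * V, hWu.mul hVu, ?_, ?_⟩
      · intro i j h1 h2
        rw [← Matrix.mul_assoc]
        by_cases hj1 : j = jF
        · subst hj1
          exact (hV3 i (hW1 i jF (by simp [hjF]; omega) h2) (hW1 i kF (by simp [hkF]; omega) h2)).1
        · by_cases hj2 : j = kF
          · subst hj2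
            exact (hV3 i (hW1 i jF (by simp [hjF]; omega) h2) (hW1 i kF (by simp [hkF]; omega) h2)).2
          · rw [hV2 i j hj1 hj2]
            exact hW1 i j h1 h2
      · intro j hj
        rw [← Matrix.mul_assoc]
        by_cases hj1 : j = jF
        · subst hj1
          exact hV1
        · have hjt : (j:ℕ) < t := by
            rcases Nat.lt_succ_iff_lt_or_eq.mp hj with h | h
            · exact h
            · exact absurd (Fin.ext (h.trans (by simp [hjF]))) hj1
          have hj2 : j ≠ kF := by
            intro h
            have := congrArg Fin.val h
            simp [hkF] at this
            omega
          rw [hV2 _ j hj1 hj2]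
          exact hW2 j hjt

include S in
lemma triangularize (A : Matrix (Fin n) (Fin n) R) :
    ∃ V : Matrix (Fin n) (Fin n) R, IsUnit V ∧
      ∀ i j : Fin n, (j:ℕ) < (i:ℕ) → (A * V) i j = 0 := by
  suffices H : ∀ k : ℕ, ∃ V : Matrix (Fin n) (Fin n) R, IsUnit V ∧
      ∀ i j : Fin n, (j:ℕ) < (i:ℕ) → n - k ≤ (i:ℕ) → (A * V) i j = 0 by
    obtain ⟨V, hVu, hV⟩ := H n
    exact ⟨V, hVu, fun i j h1 => hV i j h1 (by omega)⟩
  intro k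
  induction k with
  | zero =>
      exact ⟨1, isUnit_one, fun i j h1 h2 => absurd h2 (by have := i.isLt; omega)⟩
  | succ k ih =>
      obtain ⟨V, hVu, hV⟩ := ih
      by_cases hkn : k < n
      · have hm : n - (k+1) < n := by omega
        obtain ⟨W, hWu, hW1, hW2⟩ := S.clear_row (n - (k+1)) hm (A * V)
          (fun i j h1 h2 => hV i j h1 (by omega))
        refine ⟨V * W, hVu.mul hWu, ?_⟩
        intro i j h1 h2
        rw [← Matrix.mul_assoc]
        rcases eq_or_lt_of_le h2 with h | h
        · have hieq : i = ⟨n - (k+1), hm⟩ := Fin.ext h.symm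
          subst hieq
          exact hW2 j (by omega)
        · exact hW1 i j h1 h
      · exact ⟨V, hVu, fun i j h1 h2 => hV i j h1 (by omega)⟩

end DiffOpRing

/-- Let K be a differential field of characteristic 0. Any matrix
A ∈ M_n(K[∂]) can be written as A = T U with T upper triangular and
U invertible in M_n(K[∂]). -/
theorem stmt_10 (K : Type) [Field K] [CharZero K] (d : K → K)
    (hd_add : ∀ a b : K, d (a + b) = d a + d b)
    (hd_mul : ∀ a b : K, d (a * b) = a * d b + d a * b)
    (R : Type) [Ring R] (S : DiffOpRing K d R)
    (n : ℕ) (A : Matrix (Fin n) (Fin n) R) :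
    ∃ U T : Matrix (Fin n) (Fin n) R,
      IsUnit U ∧ (∀ i j : Fin n, j < i → T i j = 0) ∧ A = T * U := by
  obtain ⟨V, hVu, hV⟩ := S.triangularize A
  refine ⟨(hVu.unit⁻¹ : (Matrix (Fin n) (Fin n) R)ˣ).val, A * V,
    ?_, fun i j hij => hV i j hij, ?_⟩
  · exact (hVu.unit⁻¹).isUnit
  have h1 : V * (hVu.unit⁻¹).val = 1 := by
    have h2 := hVu.unit.mul_inv
    rw [hVu.unit_spec] at h2
    exact h2
  rw [Matrix.mul_assoc, h1, Matrix.mul_one]
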